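/- Let R be a commutative ring of prime characteristic p, and let 𝔞, 𝔫 be ideals of R with 𝔫^[Q′] = 0 for some power Q′ of p. Suppose that in R/𝔫 we have (((𝔞+𝔫)/𝔫)^F)^[Q̃] = ((𝔞+𝔫)/𝔫)^[Q̃] for some power Q̃ of p. Then (𝔞^F)^[Q′Q̃] = 𝔞^[Q′Q̃]. -/

import Mathlib

/-- The `q`-th Frobenius power of a set `S`: the ideal generated by `q`-th powers
of elements of `S`. -/
def frobPow {R : Type*} [CommRing R] (S : Set R) (q : ℕ) : Ideal R :=
  Ideal.span ((· ^ q) '' S)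

/-- The Frobenius closure of an ideal `I` in a ring of characteristic `p`. -/
def frobClosure {R : Type*} [CommRing R] (p : ℕ) (I : Ideal R) : Set R :=
  {r | ∃ n : ℕ, r ^ p ^ n ∈ frobPow (I : Set R) (p ^ n)}

lemma frobPow_mono {R : Type*} [CommRing R] {S T : Set R} (hST : S ⊆ T) (q : ℕ) :
    frobPow S q ≤ frobPow T q :=
  Ideal.span_mono (Set.image_mono hST)

lemma mem_frobClosure_self {R : Type*} [CommRing R] (p : ℕ) (I : Ideal R) {x : R}
    (hx : x ∈ I) : x ∈ frobClosure p I :=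
  ⟨0, Ideal.subset_span ⟨x, hx, rfl⟩⟩

lemma pow_mem_frobPow {R : Type*} [CommRing R] (p : ℕ) (hp : p.Prime) [CharP R p]
    {S : Set R} {x : R} (hx : x ∈ Ideal.span S) (n : ℕ) :
    x ^ p ^ n ∈ frobPow S (p ^ n) := by
  haveI : Fact p.Prime := ⟨hp⟩
  haveI : ExpChar R p := .prime hp
  have h1 : (iterateFrobenius R p n) x ∈ Ideal.map (iterateFrobenius R p n) (Ideal.span S) :=
    Ideal.mem_map_of_mem _ hx
  rw [Ideal.map_span] at h1
  have himg : ⇑(iterateFrobenius R p n) '' S = (· ^ p ^ n) '' S := by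
    ext y; simp [iterateFrobenius_def]
  rw [himg, iterateFrobenius_def] at h1
  exact h1

lemma frobPow_map {R : Type*} [CommRing R] (𝔫 I : Ideal R) (q : ℕ) :
    frobPow ((I.map (Ideal.Quotient.mk 𝔫) : Ideal (R ⧸ 𝔫)) : Set (R ⧸ 𝔫)) q =
      (frobPow (I : Set R) q).map (Ideal.Quotient.mk 𝔫) := by
  apply le_antisymm
  · rw [frobPow, Ideal.span_le]
    rintro _ ⟨y, hy, rfl⟩
    obtain ⟨a, ha, rfl⟩ :=
      (Ideal.mem_map_iff_of_surjective _ Ideal.Quotient.mk_surjective).mp hy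
    show ((Ideal.Quotient.mk 𝔫) a) ^ q ∈ _
    rw [← map_pow]
    exact Ideal.mem_map_of_mem _ (Ideal.subset_span ⟨a, ha, rfl⟩)
  · rw [frobPow, Ideal.map_span, Ideal.span_le]
    rintro _ ⟨_, ⟨a, ha, rfl⟩, rfl⟩
    exact Ideal.subset_span ⟨_, Ideal.mem_map_of_mem _ ha, (map_pow _ _ _).symm⟩

/-- if `𝔫^{[Q′]} = 0` and `(((𝔞+𝔫)/𝔫)^F)^{[Q̃]} = ((𝔞+𝔫)/𝔫)^{[Q̃]}` in
`R/𝔫`, then `(𝔞^F)^{[Q′Q̃]} = 𝔞^{[Q′Q̃]}`. -/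
theorem frobClosure_of_quotient {R : Type*} [CommRing R] (p : ℕ) (hp : p.Prime)
    [CharP R p] (𝔞 𝔫 : Ideal R) (e' et : ℕ)
    (h𝔫 : frobPow (𝔫 : Set R) (p ^ e') = ⊥)
    (h : frobPow (frobClosure p (𝔞.map (Ideal.Quotient.mk 𝔫))) (p ^ et) =
        frobPow ((𝔞.map (Ideal.Quotient.mk 𝔫) : Ideal (R ⧸ 𝔫)) : Set (R ⧸ 𝔫)) (p ^ et)) :
    frobPow (frobClosure p 𝔞) (p ^ e' * p ^ et) = frobPow (𝔞 : Set R) (p ^ e' * p ^ et) := by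
  haveI : Fact p.Prime := ⟨hp⟩
  apply le_antisymm
  · rw [frobPow, Ideal.span_le]
    rintro _ ⟨r, hr, rfl⟩
    obtain ⟨n, hn⟩ := hr
    -- the image of r lies in the Frobenius closure of the image ideal
    have hrq : Ideal.Quotient.mk 𝔫 r ∈ frobClosure p (𝔞.map (Ideal.Quotient.mk 𝔫)) := by
      refine ⟨n, ?_⟩
      rw [← map_pow, frobPow_map]
      exact Ideal.mem_map_of_mem _ hn
    have h1 : (Ideal.Quotient.mk 𝔫 (r ^ p ^ et)) ∈
        (frobPow (𝔞 : Set R) (p ^ et)).map (Ideal.Quotient.mk 𝔫) := by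
      rw [← frobPow_map, ← h, map_pow]
      exact Ideal.subset_span ⟨_, hrq, rfl⟩
    obtain ⟨s, hs, hsn⟩ :=
      (Ideal.mem_map_iff_of_surjective _ Ideal.Quotient.mk_surjective).mp h1
    have hν : r ^ p ^ et - s ∈ 𝔫 := (Ideal.Quotient.eq).mp hsn.symm
    set ν : R := r ^ p ^ et - s with hνdef
    have hsplit : r ^ (p ^ e' * p ^ et) = s ^ p ^ e' + ν ^ p ^ e' := by
      rw [mul_comm, pow_mul, show r ^ p ^ et = s + ν by rw [hνdef]; ring,
        add_pow_char_pow]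
    have hν0 : ν ^ p ^ e' = 0 := by
      have : ν ^ p ^ e' ∈ frobPow (𝔫 : Set R) (p ^ e') :=
        Ideal.subset_span ⟨ν, hν, rfl⟩
      rwa [h𝔫, Ideal.mem_bot] at this
    have hsmem : s ^ p ^ e' ∈ frobPow (𝔞 : Set R) (p ^ e' * p ^ et) := by
      have h2 : s ^ p ^ e' ∈ frobPow ((· ^ p ^ et) '' (𝔞 : Set R)) (p ^ e') :=
        pow_mem_frobPow p hp hs e'
      refine (Ideal.span_le.mpr ?_) h2
      rintro _ ⟨_, ⟨a, ha, rfl⟩, rfl⟩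
      refine Ideal.subset_span ⟨a, ha, ?_⟩
      show a ^ (p ^ e' * p ^ et) = (a ^ p ^ et) ^ p ^ e'
      rw [← pow_mul, mul_comm]
    show r ^ (p ^ e' * p ^ et) ∈ _
    rw [hsplit, hν0, add_zero]
    exact hsmem
  · exact frobPow_mono (fun x hx => mem_frobClosure_self p 𝔞 hx) _
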